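/- Fix k ∈ ℕ. If a : (0,1) → ℝ satisfies ∫₀¹ a(r)² r dr < ∞ and ∫₀¹ r^{2i+k−1} a(r) dr = 0 for every integer i ≥ 1, then a = 0 almost everywhere on (0,1). -/

import Mathlib

open MeasureTheory

/-- completeness of the moments. If `a ∈ L²((0,1), r dr)` and
`∫₀¹ r^{2i+k-1} a(r) dr = 0` for every `i ≥ 1`, then `a = 0` a.e. on `(0,1)`. -/
theorem moments_determine_weighted_L2 (k : ℕ) (a : ℝ → ℝ)
    (hmeas : AEMeasurable a (volume.restrict (Set.Ioo (0:ℝ) 1)))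
    (hL2 : IntegrableOn (fun r => a r ^ 2 * r) (Set.Ioo (0:ℝ) 1))
    (hmom : ∀ i : ℕ, 1 ≤ i → ∫ r in Set.Ioo (0:ℝ) 1, r ^ (2 * i + k - 1) * a r = 0) :
    ∀ᵐ r ∂(volume.restrict (Set.Ioo (0:ℝ) 1)), a r = 0 := by
  set f : ℝ → ℝ := fun r => r ^ (k + 1) * a r with hf_def
  have hfmeas : AEStronglyMeasurable f (volume.restrict (Set.Ioo (0:ℝ) 1)) :=
    ((measurable_id.pow_const (k + 1)).aemeasurable.mul hmeas).aestronglyMeasurable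
  -- integrability of f on (0,1) via AM-GM
  have hint : IntegrableOn f (Set.Ioo (0:ℝ) 1) := by
    have hb : IntegrableOn
        (fun r : ℝ => (1 / 2 : ℝ) * (r ^ (2 * k + 1) + a r ^ 2 * r)) (Set.Ioo (0:ℝ) 1) := by
      apply Integrable.const_mul
      exact ((intervalIntegral.intervalIntegrable_pow (2 * k + 1)).1.mono_set
        Set.Ioo_subset_Ioc_self).add hL2
    refine Integrable.mono hb hfmeas ?_
    filter_upwards [ae_restrict_mem measurableSet_Ioo] with r hr
    obtain ⟨hr0, hr1⟩ := hr
    have habs : |f r| = r ^ (k + 1) * |a r| := by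
      rw [hf_def, abs_mul, abs_of_nonneg (pow_nonneg hr0.le _)]
    have hsq : (r ^ k - |a r|) ^ 2 ≥ 0 := sq_nonneg _
    have h1 : r ^ (k + 1) * |a r| ≤ (1 / 2) * (r ^ (2 * k + 1) + a r ^ 2 * r) := by
      have h2 : r ^ (2 * k + 1) = (r ^ k) ^ 2 * r := by ring
      have h3 : r ^ (k + 1) = r ^ k * r := by ring
      have h4 : a r ^ 2 = |a r| ^ 2 := (sq_abs _).symm
      rw [h2, h3, h4]
      nlinarith [hr0.le, sq_nonneg (r ^ k - |a r|)]
    have hbnn : (0:ℝ) ≤ (1 / 2) * (r ^ (2 * k + 1) + a r ^ 2 * r) := by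
      positivity
    rw [Real.norm_eq_abs, Real.norm_eq_abs, habs, abs_of_nonneg hbnn]
    exact h1
  -- moments of f against even powers vanish
  have hmomf : ∀ j : ℕ, ∫ r in Set.Ioo (0:ℝ) 1, (r ^ 2) ^ j * f r = 0 := by
    intro j
    have := hmom (j + 1) (by omega)
    have he : 2 * (j + 1) + k - 1 = 2 * j + k + 1 := by omega
    rw [he] at this
    have h2 : ∫ r in Set.Ioo (0:ℝ) 1, (r ^ 2) ^ j * f r
        = ∫ r in Set.Ioo (0:ℝ) 1, r ^ (2 * j + k + 1) * a r := by
      apply setIntegral_congr_fun measurableSet_Ioo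
      intro r _
      rw [hf_def]
      ring
    rw [h2, this]
  -- every polynomial evaluated at r^2 integrates to zero against f,
  -- and is integrable
  have hpoly : ∀ p : Polynomial ℝ,
      IntegrableOn (fun r => p.eval (r ^ 2) * f r) (Set.Ioo (0:ℝ) 1) ∧
      ∫ r in Set.Ioo (0:ℝ) 1, p.eval (r ^ 2) * f r = 0 := by
    intro p
    induction p using Polynomial.induction_on' with
    | add p q hp hq =>
      constructor
      · have heq : (fun r => (p + q).eval (r ^ 2) * f r)
            = fun r => p.eval (r ^ 2) * f r + q.eval (r ^ 2) * f r := by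
          funext r
          simp only [Polynomial.eval_add]
          ring
        rw [IntegrableOn, heq]
        exact hp.1.add hq.1
      · have : ∫ r in Set.Ioo (0:ℝ) 1, ((p + q).eval (r ^ 2) * f r)
            = ∫ r in Set.Ioo (0:ℝ) 1, (p.eval (r ^ 2) * f r + q.eval (r ^ 2) * f r) := by
          apply setIntegral_congr_fun measurableSet_Ioo
          intro r _
          simp [Polynomial.eval_add]
          ring
        rw [this, integral_add hp.1 hq.1, hp.2, hq.2, add_zero]
    | monomial n c =>
      have hintn : IntegrableOn (fun r => c * ((r ^ 2) ^ n * f r)) (Set.Ioo (0:ℝ) 1) := by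
        apply Integrable.const_mul
        refine Integrable.mono hint ?_ ?_
        · exact ((measurable_id.pow_const 2).pow_const n).aemeasurable.aestronglyMeasurable.mul
            hfmeas
        · filter_upwards [ae_restrict_mem measurableSet_Ioo] with r hr
          obtain ⟨hr0, hr1⟩ := hr
          rw [Real.norm_eq_abs, Real.norm_eq_abs, abs_mul]
          have h1 : |(r ^ 2) ^ n| ≤ 1 := by
            rw [abs_of_nonneg (by positivity)]
            exact pow_le_one₀ (by positivity) (by nlinarith)
          nlinarith [abs_nonneg (f r), abs_nonneg ((r ^ 2) ^ n)]
      constructor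
      · have heq : (fun r => (Polynomial.monomial n c).eval (r ^ 2) * f r)
            = fun r => c * ((r ^ 2) ^ n * f r) := by
          funext r
          simp only [Polynomial.eval_monomial]
          ring
        rw [IntegrableOn, heq]
        exact hintn
      · have he : ∫ r in Set.Ioo (0:ℝ) 1, (Polynomial.monomial n c).eval (r ^ 2) * f r
            = ∫ r in Set.Ioo (0:ℝ) 1, c * ((r ^ 2) ^ n * f r) := by
          apply setIntegral_congr_fun measurableSet_Ioo
          intro r _
          simp [Polynomial.eval_monomial]
          ring
        rw [he, integral_const_mul, hmomf n, mul_zero]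
  -- the indicator extension of f to ℝ
  set F : ℝ → ℝ := Set.indicator (Set.Ioo (0:ℝ) 1) f with hF_def
  have hFint : Integrable F := (integrable_indicator_iff measurableSet_Ioo).2 hint
  -- F vanishes as a distribution
  have hFzero : ∀ᵐ x : ℝ, F x = 0 := by
    apply ae_eq_zero_of_integral_contDiff_smul_eq_zero hFint.locallyIntegrable
    intro g hg hgsupp
    have hgb : ∃ C, ∀ x, ‖g x‖ ≤ C :=
      hg.continuous.bounded_above_of_compact_support hgsupp
    -- reduce to the integral over (0,1)
    have hred : ∫ x, g x • F x = ∫ r in Set.Ioo (0:ℝ) 1, g r * f r := by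
      rw [← integral_indicator measurableSet_Ioo]
      congr 1
      funext x
      by_cases hx : x ∈ Set.Ioo (0:ℝ) 1 <;>
        simp [hF_def, Set.indicator_apply, hx]
    rw [hred]
    -- integrability of g * f
    have hgf : IntegrableOn (fun r => g r * f r) (Set.Ioo (0:ℝ) 1) :=
      Integrable.bdd_mul hint (hg.continuous.aestronglyMeasurable.restrict) (ae_of_all _ hgb.choose_spec)
    -- show the integral is 0 by polynomial approximation
    set I := ∫ r in Set.Ioo (0:ℝ) 1, g r * f r with hI_def
    set C := ∫ r in Set.Ioo (0:ℝ) 1, |f r| with hC_def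
    have hC0 : 0 ≤ C := by
      apply integral_nonneg
      intro r; exact abs_nonneg _
    have key : ∀ ε : ℝ, 0 < ε → |I| ≤ ε * C := by
      intro ε hε
      -- ψ(s) = g(√s) is continuous, approximate by a polynomial on [0,1]
      have hψ : ContinuousOn (fun s => g (Real.sqrt s)) (Set.Icc (0:ℝ) 1) :=
        (hg.continuous.comp Real.continuous_sqrt).continuousOn
      obtain ⟨p, hp⟩ := exists_polynomial_near_of_continuousOn 0 1
        (fun s => g (Real.sqrt s)) hψ ε hε
      -- on (0,1), |p(r²) - g r| < ε
      have hpg : ∀ r ∈ Set.Ioo (0:ℝ) 1, |p.eval (r ^ 2) - g r| ≤ ε := by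
        intro r hr
        obtain ⟨hr0, hr1⟩ := hr
        have hmem : r ^ 2 ∈ Set.Icc (0:ℝ) 1 := by
          constructor
          · positivity
          · nlinarith
        have := hp (r ^ 2) hmem
        rw [Real.sqrt_sq hr0.le] at this
        exact this.le
      have hdiff : I = ∫ r in Set.Ioo (0:ℝ) 1, (g r - p.eval (r ^ 2)) * f r := by
        have hsplit : ∫ r in Set.Ioo (0:ℝ) 1, (g r - p.eval (r ^ 2)) * f r
            = (∫ r in Set.Ioo (0:ℝ) 1, g r * f r)
              - ∫ r in Set.Ioo (0:ℝ) 1, p.eval (r ^ 2) * f r := by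
          rw [← integral_sub hgf (hpoly p).1]
          apply setIntegral_congr_fun measurableSet_Ioo
          intro r _
          ring
        rw [hsplit, (hpoly p).2, sub_zero, hI_def]
      rw [hdiff]
      calc |∫ r in Set.Ioo (0:ℝ) 1, (g r - p.eval (r ^ 2)) * f r|
          ≤ ∫ r in Set.Ioo (0:ℝ) 1, |g r - p.eval (r ^ 2)| * |f r| :=
            by simpa [Real.norm_eq_abs] using
              norm_integral_le_integral_norm (μ := volume.restrict (Set.Ioo (0:ℝ) 1))
                (fun r => (g r - p.eval (r ^ 2)) * f r)
        _ ≤ ∫ r in Set.Ioo (0:ℝ) 1, ε * |f r| := by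
            apply integral_mono_of_nonneg
            · filter_upwards with r using mul_nonneg (abs_nonneg _) (abs_nonneg _)
            · exact hint.abs.const_mul ε
            · filter_upwards [ae_restrict_mem measurableSet_Ioo] with r hr
              rw [abs_sub_comm]
              exact mul_le_mul_of_nonneg_right (hpg r hr) (abs_nonneg _)
        _ = ε * C := by rw [hC_def, integral_const_mul]
    -- conclude I = 0
    by_contra hI
    have h1 : 0 < |I| := abs_pos.2 hI
    have h2 := key (|I| / (C + 1)) (by positivity)
    have h3 : |I| / (C + 1) * C < |I| := by
      rw [div_mul_eq_mul_div, div_lt_iff₀ (by linarith)]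
      nlinarith
    linarith
  -- pull back to a = 0 a.e. on (0,1)
  have hres : ∀ᵐ r ∂(volume.restrict (Set.Ioo (0:ℝ) 1)), F r = 0 :=
    ae_restrict_of_ae hFzero
  filter_upwards [hres, ae_restrict_mem measurableSet_Ioo] with r hFr hr
  rw [hF_def, Set.indicator_of_mem hr, hf_def] at hFr
  have hrpow : r ^ (k + 1) ≠ 0 := pow_ne_zero _ (ne_of_gt hr.1)
  exact (mul_eq_zero.mp hFr).resolve_left hrpow
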